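/- arXiv:2110.02838 — 4 statements merged into one kernel-verified Lean document; each statement's English description precedes it below -/
import Mathlib

section
/- Transformation rule for the operator 𝔡: let Z be a meromorphic (or holomorphic, nonvanishing) function, h a locally injective holomorphic change of coordinate with w = h(z), and let Z̃ be defined so that Z̃(w)·(dw)⁴ = Z(z)·(dz)⁴, i.e. Z̃(h(z)) = Z(z)/h'(z)⁴. Define 𝔡_z(Z) = (1/2)·Z''/Z - (9/16)·(Z'/Z)² (derivatives in z), and similarly 𝔡_w(Z̃) in the variable w. Then 𝔡_z(Z)(z) = 𝔡_w(Z̃)(h(z))·h'(z)² + 2·S(h)(z), where S(h) is the Schwarzian derivative of h. -/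
theorem stmt4 (U V : Set ℂ) (hU : IsOpen U) (z : ℂ) (hz : z ∈ U)
    (Z Z' Z'' h h' h'' h''' Zt Zt' Zt'' : ℂ → ℂ)
    (hZ : ∀ w ∈ U, HasDerivAt Z (Z' w) w)
    (hZd : ∀ w ∈ U, HasDerivAt Z' (Z'' w) w)
    (hh : ∀ w ∈ U, HasDerivAt h (h' w) w)
    (hhd : ∀ w ∈ U, HasDerivAt h' (h'' w) w)
    (hhdd : ∀ w ∈ U, HasDerivAt h'' (h''' w) w)
    (hmaps : Set.MapsTo h U V)
    (hZt : ∀ v ∈ V, HasDerivAt Zt (Zt' v) v)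
    (hZtd : ∀ v ∈ V, HasDerivAt Zt' (Zt'' v) v)
    (hZne : ∀ w ∈ U, Z w ≠ 0)
    (hhne : ∀ w ∈ U, h' w ≠ 0)
    (hrel : ∀ w ∈ U, Zt (h w) = Z w / (h' w) ^ 4) :
    (1 / 2) * (Z'' z / Z z) - (9 / 16) * (Z' z / Z z) ^ 2 =
      ((1 / 2) * (Zt'' (h z) / Zt (h z)) - (9 / 16) * (Zt' (h z) / Zt (h z)) ^ 2) * (h' z) ^ 2
        + 2 * (h''' z / h' z - (3 / 2) * (h'' z / h' z) ^ 2) := by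
  have step1 : ∀ w ∈ U, Zt' (h w) * h' w =
      (Z' w * h' w ^ 4 - Z w * (4 * h' w ^ 3 * h'' w)) / (h' w ^ 4) ^ 2 := by
    intro w hw
    have heq : (fun x => Zt (h x)) =ᶠ[nhds w] (fun x => Z x / h' x ^ 4) :=
      Filter.eventuallyEq_of_mem (hU.mem_nhds hw) (fun x hx => hrel x hx)
    have d1 : HasDerivAt (fun x => Zt (h x)) (Zt' (h w) * h' w) w :=
      (hZt _ (hmaps hw)).comp w (hh w hw)
    have d2 := ((hZ w hw).div ((hhd w hw).pow 4) (pow_ne_zero 4 (hhne w hw)))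
    have d2' := d2.congr_of_eventuallyEq heq
    have := d1.unique d2'
    simpa using this
  -- second derivative relation at z
  have heq2 : (fun x => Zt' (h x) * h' x) =ᶠ[nhds z]
      (fun x => (Z' x * h' x ^ 4 - Z x * (4 * h' x ^ 3 * h'' x)) / (h' x ^ 4) ^ 2) :=
    Filter.eventuallyEq_of_mem (hU.mem_nhds hz) (fun x hx => step1 x hx)
  have d3 : HasDerivAt (fun x => Zt' (h x) * h' x)
      ((Zt'' (h z) * h' z) * h' z + Zt' (h z) * h'' z) z :=
    (((hZtd _ (hmaps hz)).comp z (hh z hz)).mul (hhd z hz))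
  have d4 := (((hZd z hz).mul ((hhd z hz).pow 4)).sub
      ((hZ z hz).mul ((((hhd z hz).pow 3).const_mul 4).mul (hhdd z hz)))).div
      (((hhd z hz).pow 4).pow 2) (pow_ne_zero 2 (pow_ne_zero 4 (hhne z hz)))
  have key2 := d3.unique (d4.congr_of_eventuallyEq heq2)
  have key1 := step1 z hz
  have hA : Zt' (h z) =
      ((Z' z * h' z ^ 4 - Z z * (4 * h' z ^ 3 * h'' z)) / (h' z ^ 4) ^ 2) / h' z := by
    rw [eq_div_iff (hhne z hz)]; exact key1
  have hB' : Zt'' (h z) * h' z * h' z =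
      ((Zt'' (h z) * h' z) * h' z + Zt' (h z) * h'' z) - Zt' (h z) * h'' z := by ring
  have hne := hhne z hz
  have hZn := hZne z hz
  have hB : Zt'' (h z) = (((Zt'' (h z) * h' z) * h' z + Zt' (h z) * h'' z)
      - Zt' (h z) * h'' z) / (h' z * h' z) := by
    rw [eq_div_iff (mul_ne_zero hne hne)]; linear_combination hB'
  rw [key2] at hB
  have hA' : Zt' (h z) = (Z' z * h' z - 4 * Z z * h'' z) / h' z ^ 6 := by
    rw [hA]; field_simp
  have hB2 : Zt'' (h z) = (Z'' z * h' z ^ 2 - 9 * Z' z * h' z * h'' z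
      - 4 * Z z * h' z * h''' z + 24 * Z z * h'' z ^ 2) / h' z ^ 8 := by
    rw [hB, hA']; simp only [Pi.pow_apply, Pi.mul_apply, Pi.sub_apply]; field_simp; ring
  have hq1 : Zt' (h z) / Zt (h z) = (Z' z * h' z - 4 * Z z * h'' z) / (Z z * h' z ^ 2) := by
    rw [hA', hrel z hz]
    field_simp
  have hq2 : Zt'' (h z) / Zt (h z) = (Z'' z * h' z ^ 2 - 9 * Z' z * h' z * h'' z
      - 4 * Z z * h' z * h''' z + 24 * Z z * h'' z ^ 2) / (Z z * h' z ^ 4) := by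
    rw [hB2, hrel z hz]
    field_simp
  rw [hq1, hq2]
  field_simp [hne, hZn]
  ring
end

section
/- The operator 𝔡 is invariant under Möbius coordinate changes: with the notation of the transformation rule, if h is a Möbius transformation (so S(h)=0), then 𝔡_z(Z)(z) = 𝔡_w(Z̃)(h(z))·h'(z)², i.e., the quadratic differential 𝔡(Z dz⁴) := ((1/2)Z''/Z - (9/16)(Z'/Z)²)dz² is well defined with respect to a projective atlas. -/
set_option maxHeartbeats 1000000 in
theorem stmt5 (U V : Set ℂ) (hU : IsOpen U) (a b c d : ℂ) (hdet : a * d - b * c = 1)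
    (hcd : ∀ w ∈ U, c * w + d ≠ 0)
    (Z Z' Z'' Zt Zt' Zt'' : ℂ → ℂ)
    (hZne : ∀ w ∈ U, Z w ≠ 0)
    (hZ : ∀ w ∈ U, HasDerivAt Z (Z' w) w)
    (hZd : ∀ w ∈ U, HasDerivAt Z' (Z'' w) w)
    (h hder : ℂ → ℂ)
    (hmob : ∀ w, h w = (a * w + b) / (c * w + d))
    (hderdef : ∀ w, hder w = (a * d - b * c) / (c * w + d) ^ 2)
    (hmaps : Set.MapsTo h U V)
    (hZt : ∀ v ∈ V, HasDerivAt Zt (Zt' v) v)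
    (hZtd : ∀ v ∈ V, HasDerivAt Zt' (Zt'' v) v)
    (hrel : ∀ w ∈ U, Zt (h w) = Z w / (hder w) ^ 4)
    (z : ℂ) (hz : z ∈ U) :
    (1 / 2) * (Z'' z / Z z) - (9 / 16) * (Z' z / Z z) ^ 2 =
      ((1 / 2) * (Zt'' (h z) / Zt (h z)) - (9 / 16) * (Zt' (h z) / Zt (h z)) ^ 2)
        * (hder z) ^ 2 := by
  have hfun : h = fun w => (a * w + b) / (c * w + d) := funext hmob
  have hder1 : ∀ w, hder w = 1 / (c * w + d) ^ 2 := by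
    intro w; rw [hderdef, hdet]
  -- derivative of h on U
  have hh : ∀ w ∈ U, HasDerivAt h (hder w) w := by
    intro w hw
    have hq := hcd w hw
    have h1 : HasDerivAt (fun x : ℂ => a * x + b) a w := by
      simpa using ((hasDerivAt_id w).const_mul a).add_const b
    have h2 : HasDerivAt (fun x : ℂ => c * x + d) c w := by
      simpa using ((hasDerivAt_id w).const_mul c).add_const d
    have := h1.div h2 hq
    rw [hfun]
    refine HasDerivAt.congr_deriv this ?_
    rw [hder1 w, show a * (c * w + d) - (a * w + b) * c = 1 from by linear_combination hdet]
  have hq8 : ∀ w : ℂ, HasDerivAt (fun x : ℂ => (c * x + d) ^ 8)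
      (8 * (c * w + d) ^ 7 * c) w := by
    intro w
    have h2 : HasDerivAt (fun x : ℂ => c * x + d) c w := by
      simpa using ((hasDerivAt_id w).const_mul c).add_const d
    simpa using h2.fun_pow 8
  have hq9 : ∀ w : ℂ, HasDerivAt (fun x : ℂ => (c * x + d) ^ 9)
      (9 * (c * w + d) ^ 8 * c) w := by
    intro w
    have h2 : HasDerivAt (fun x : ℂ => c * x + d) c w := by
      simpa using ((hasDerivAt_id w).const_mul c).add_const d
    simpa using h2.fun_pow 9
  have hq10 : ∀ w : ℂ, HasDerivAt (fun x : ℂ => (c * x + d) ^ 10)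
      (10 * (c * w + d) ^ 9 * c) w := by
    intro w
    have h2 : HasDerivAt (fun x : ℂ => c * x + d) c w := by
      simpa using ((hasDerivAt_id w).const_mul c).add_const d
    simpa using h2.fun_pow 10
  -- g = Z * q^8 agrees with Zt ∘ h on U
  have heqg : ∀ w ∈ U, Zt (h w) = Z w * (c * w + d) ^ 8 := by
    intro w hw
    rw [hrel w hw, hder1 w]
    have hq := hcd w hw
    rw [div_pow, one_pow, div_div_eq_mul_div, div_one, ← pow_mul]
  -- first derivative identity
  have key1 : ∀ w ∈ U, Zt' (h w) * hder w
      = Z' w * (c * w + d) ^ 8 + Z w * (8 * (c * w + d) ^ 7 * c) := by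
    intro w hw
    have hchain : HasDerivAt (fun x => Zt (h x)) (Zt' (h w) * hder w) w :=
      (hZt (h w) (hmaps hw)).comp w (hh w hw)
    have hg : HasDerivAt (fun x => Z x * (c * x + d) ^ 8)
        (Z' w * (c * w + d) ^ 8 + Z w * (8 * (c * w + d) ^ 7 * c)) w :=
      (hZ w hw).mul (hq8 w)
    have hev : (fun x => Z x * (c * x + d) ^ 8) =ᶠ[nhds w] (fun x => Zt (h x)) :=
      Filter.eventuallyEq_of_mem (hU.mem_nhds hw) (fun x hx => (heqg x hx).symm)
    exact (hchain.congr_of_eventuallyEq hev).unique hg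
  -- explicit formula for Zt' ∘ h
  have hZt'eq : ∀ w ∈ U, Zt' (h w)
      = Z' w * (c * w + d) ^ 10 + 8 * c * (Z w * (c * w + d) ^ 9) := by
    intro w hw
    have hq := hcd w hw
    have := key1 w hw
    rw [hder1 w] at this
    field_simp at this
    linear_combination this
  -- second derivative identity
  have key2 : Zt'' (h z) * hder z
      = (Z'' z * (c * z + d) ^ 10 + Z' z * (10 * (c * z + d) ^ 9 * c))
        + (8 * c) * (Z' z * (c * z + d) ^ 9 + Z z * (9 * (c * z + d) ^ 8 * c)) := by
    have hchain : HasDerivAt (fun x => Zt' (h x)) (Zt'' (h z) * hder z) z :=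
      (hZtd (h z) (hmaps hz)).comp z (hh z hz)
    have hp : HasDerivAt
        (fun x => Z' x * (c * x + d) ^ 10 + 8 * c * (Z x * (c * x + d) ^ 9))
        ((Z'' z * (c * z + d) ^ 10 + Z' z * (10 * (c * z + d) ^ 9 * c))
          + (8 * c) * (Z' z * (c * z + d) ^ 9 + Z z * (9 * (c * z + d) ^ 8 * c))) z :=
      ((hZd z hz).mul (hq10 z)).add (((hZ z hz).mul (hq9 z)).const_mul (8 * c))
    have hev : (fun x => Z' x * (c * x + d) ^ 10 + 8 * c * (Z x * (c * x + d) ^ 9))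
        =ᶠ[nhds z] (fun x => Zt' (h x)) :=
      Filter.eventuallyEq_of_mem (hU.mem_nhds hz) (fun x hx => (hZt'eq x hx).symm)
    exact (hchain.congr_of_eventuallyEq hev).unique hp
  -- now pure algebra
  have hq := hcd z hz
  have hZz := hZne z hz
  have hZt''eq : Zt'' (h z)
      = ((Z'' z * (c * z + d) ^ 10 + Z' z * (10 * (c * z + d) ^ 9 * c))
        + (8 * c) * (Z' z * (c * z + d) ^ 9 + Z z * (9 * (c * z + d) ^ 8 * c)))
        * (c * z + d) ^ 2 := by
    have := key2
    rw [hder1 z] at this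
    field_simp at this
    linear_combination this
  rw [hZt''eq, hZt'eq z hz, heqg z hz, hder1 z]
  obtain ⟨Q, hQ⟩ : ∃ Q : ℂ, Q = c * z + d := ⟨_, rfl⟩
  rw [← hQ] at hq ⊢
  field_simp
  ring
end

section
/- Local normalization of a projective connection: suppose on a neighborhood of 0 in ℂ a holomorphic sl(2,ℂ)-valued 1-form α dw is given with α = x¹₁(a¹₁ - a²₂) + a¹₂·0 + a²₁ + x¹₂·a¹₂ (i.e., lower-left entry identically 1), where x¹₁, x¹₂ are holomorphic. If g is a holomorphic solution of g'' - g'² + (x¹₁)' + (x¹₁)² + x¹₂ = 0 near 0, b := e^{-g}(x¹₁ + g'), and z is a primitive of e^{2g}dw with z(0)=0, then the gauge transform of α dw by the map x = e^g a¹₁ + e^{-g} a²₂ + b a¹₂ (i.e., x⁻¹(α dw)x + x⁻¹ dx) equals a²₁ dz, where a²₁ is the elementary matrix with 1 in position (2,1). -/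
open Matrix

noncomputable section

/-- 2×2 elementary matrices a^i_j. -/
def E2 (i j : Fin 2) : Matrix (Fin 2) (Fin 2) ℂ := Matrix.single i j 1

theorem stmt6 (U : Set ℂ) (hU : IsOpen U)
    (g g' g'' x11 x11' x12 b zc : ℂ → ℂ)
    (X DX : ℂ → Matrix (Fin 2) (Fin 2) ℂ)
    (hg : ∀ w ∈ U, HasDerivAt g (g' w) w)
    (hgd : ∀ w ∈ U, HasDerivAt g' (g'' w) w)
    (hx11 : ∀ w ∈ U, HasDerivAt x11 (x11' w) w)
    (hode : ∀ w ∈ U, g'' w - (g' w) ^ 2 + x11' w + (x11 w) ^ 2 + x12 w = 0)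
    (hb : ∀ w, b w = Complex.exp (-(g w)) * (x11 w + g' w))
    (hX : ∀ w, X w = Complex.exp (g w) • E2 0 0 + Complex.exp (-(g w)) • E2 1 1 + b w • E2 0 1)
    (hDX : ∀ w ∈ U, ∀ i j, HasDerivAt (fun t => X t i j) (DX w i j) w)
    (hzc : ∀ w ∈ U, HasDerivAt zc (Complex.exp (2 * g w)) w) (hzc0 : zc 0 = 0) :
    ∀ w ∈ U,
      (X w)⁻¹ * (x11 w • (E2 0 0 - E2 1 1) + E2 1 0 + x12 w • E2 0 1) * X w
          + (X w)⁻¹ * DX w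
        = Complex.exp (2 * g w) • E2 1 0 := by
  intro w hw
  have hem : Complex.exp (g w) * Complex.exp (-(g w)) = 1 := by
    rw [← Complex.exp_add]; simp
  have h2 : Complex.exp (2 * g w) = Complex.exp (g w) * Complex.exp (g w) := by
    rw [← Complex.exp_add, two_mul]
  -- derivative of b
  have hb' : HasDerivAt b
      (Complex.exp (-(g w)) * (x11' w + g'' w)
        - g' w * Complex.exp (-(g w)) * (x11 w + g' w)) w := by
    have : HasDerivAt (fun t => Complex.exp (-(g t)) * (x11 t + g' t))
        (Complex.exp (-(g w)) * -(g' w) * (x11 w + g' w)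
          + Complex.exp (-(g w)) * (x11' w + g'' w)) w := by
      exact (((hg w hw).neg.cexp).mul ((hx11 w hw).add (hgd w hw)))
    have heq : b = fun t => Complex.exp (-(g t)) * (x11 t + g' t) := funext hb
    rw [heq]
    convert this using 1
    ring
  -- entries of X as functions
  have hXfun : ∀ i j : Fin 2, (fun t => X t i j)
      = fun t => Complex.exp (g t) * E2 0 0 i j + Complex.exp (-(g t)) * E2 1 1 i j
          + b t * E2 0 1 i j := by
    intro i j; funext t
    simp [hX, Matrix.add_apply, Matrix.smul_apply, smul_eq_mul]
  -- value of DX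
  have hDXval : ∀ i j : Fin 2, DX w i j
      = g' w * Complex.exp (g w) * E2 0 0 i j
        + (-(g' w)) * Complex.exp (-(g w)) * E2 1 1 i j
        + (Complex.exp (-(g w)) * (x11' w + g'' w)
            - g' w * Complex.exp (-(g w)) * (x11 w + g' w)) * E2 0 1 i j := by
    intro i j
    refine (hDX w hw i j).unique ?_
    rw [hXfun i j]
    exact ((((hg w hw).cexp.mul_const _).add
      (((hg w hw).neg.cexp.mul_const _))).add (hb'.mul_const _)) |>.congr_deriv (by simp only [Pi.neg_apply]; ring)
  -- inverse of X
  have hinv : (X w)⁻¹ = Complex.exp (-(g w)) • E2 0 0 + Complex.exp (g w) • E2 1 1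
      - b w • E2 0 1 := by
    refine Matrix.inv_eq_right_inv ?_
    rw [hX]
    ext i j
    fin_cases i <;> fin_cases j <;>
      simp [E2, Matrix.mul_apply, Fin.sum_univ_two, Matrix.single, Matrix.one_apply]
    all_goals
      first
        | ring1
        | exact mul_inv_cancel₀ (Complex.exp_ne_zero _)
        | exact inv_mul_cancel₀ (Complex.exp_ne_zero _)
        | exact hem
        | (rw [← Complex.exp_add]; simp)
  have hode' := hode w hw
  rw [hinv, hX w]
  ext i j
  have hDij := hDXval i j
  fin_cases i <;> fin_cases j <;>
    simp [E2, Matrix.mul_apply, Fin.sum_univ_two, Matrix.single, hDXval, hb, hode',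
      Matrix.one_apply]
  all_goals
    first
      | ring1
      | linear_combination -h2
      | linear_combination Complex.exp (-g w) ^ 2 * hode'
end
end

section
/- The isotropic W-curve with parameter q = m/n: for positive coprime integers m ≠ n, with ε = (m+n) mod 2, define v_q(z) = (m-n)e₁ - (m+n)z^{(1+ε)m}e₃ - 2i√(mn)·z^{(m+n)(1+ε)/2}e₄ and w_q(z) = (m-n)e₂ - 2i√(mn)·z^{(m+n)(1+ε)/2}e₃ + (m+n)z^{n(1+ε)}e₄. Then for all z ∈ ℂ: (i) ω(v_q(z), w_q(z)) = 0 (Lagrangian condition), and (ii) ω(v_q, v_q')·ω(w_q, w_q') - ω(v_q, w_q')² = 0 (isotropy), where ω is the symplectic form ω(x,y) = x₁y₃ - x₃y₁ + x₂y₄ - x₄y₂ and ' denotes d/dz. -/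
noncomputable section

def omegaC (x y : Fin 4 → ℂ) : ℂ := x 0 * y 2 - x 2 * y 0 + x 1 * y 3 - x 3 * y 1

theorem stmt12 (m n : ℕ) (hm : 0 < m) (hn : 0 < n) (hmn : m ≠ n) (hcop : Nat.Coprime m n)
    (sq : ℂ) (hsq : sq ^ 2 = (m : ℂ) * n) :
    let ε : ℕ := (m + n) % 2
    let v : ℂ → Fin 4 → ℂ := fun z =>
      ![(m : ℂ) - n, 0, -((m : ℂ) + n) * z ^ ((1 + ε) * m),
        -2 * Complex.I * sq * z ^ ((m + n) * (1 + ε) / 2)]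
    let w : ℂ → Fin 4 → ℂ := fun z =>
      ![0, (m : ℂ) - n, -2 * Complex.I * sq * z ^ ((m + n) * (1 + ε) / 2),
        ((m : ℂ) + n) * z ^ ((1 + ε) * n)]
    let v' : ℂ → Fin 4 → ℂ := fun z i => deriv (fun t => v t i) z
    let w' : ℂ → Fin 4 → ℂ := fun z i => deriv (fun t => w t i) z
    ∀ z : ℂ,
      omegaC (v z) (w z) = 0 ∧
      omegaC (v z) (v' z) * omegaC (w z) (w' z) - (omegaC (v z) (w' z)) ^ 2 = 0 := by
  intro ε v w v' w' z
  have hk : 2 ∣ (m + n) * (1 + ε) := by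
    rcases Nat.even_or_odd (m + n) with h | h
    · exact Dvd.dvd.mul_right h.two_dvd _
    · have hε : ε = 1 := Nat.odd_iff.mp h
      exact ⟨m + n, by rw [hε]; ring⟩
  have h2a : 2 * ((m + n) * (1 + ε) / 2) = (m + n) * (1 + ε) := Nat.mul_div_cancel' hk
  constructor
  · simp [omegaC, v, w]; ring
  · simp only [omegaC, v, w, v', w', Matrix.cons_val_zero, Matrix.cons_val_one,
      Matrix.head_cons, Matrix.cons_val_two, Matrix.tail_cons, Matrix.cons_val_three]
    simp only [deriv_const_mul_field', deriv_pow_field, deriv_const']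
    set a := (m + n) * (1 + ε) / 2 with ha
    set k1 := (1 + ε) * m with hk1d
    set k2 := (1 + ε) * n with hk2d
    have hs : k1 + k2 = 2 * a := by rw [h2a, hk1d, hk2d]; ring
    have hk1 : 1 ≤ k1 := Nat.mul_pos (by omega) hm
    have hk2 : 1 ≤ k2 := Nat.mul_pos (by omega) hn
    have hz : z ^ (k1 - 1) * z ^ (k2 - 1) = z ^ (a - 1) * z ^ (a - 1) := by
      rw [← pow_add, ← pow_add]; congr 1; omega
    have key : (m + n) * (m + n) * (k1 * k2) = 2 * a * (2 * a) * (m * n) := by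
      rw [h2a, hk1d, hk2d]; ring
    have keyC : ((m : ℂ) + n) * ((m : ℂ) + n) * ((k1 : ℂ) * (k2 : ℂ))
        = 2 * (a : ℂ) * (2 * (a : ℂ)) * ((m : ℂ) * (n : ℂ)) := by
      exact_mod_cast congrArg (Nat.cast : ℕ → ℂ) key
    have hI : Complex.I ^ 2 = -1 := Complex.I_sq
    linear_combination (-(((m : ℂ) - n) ^ 2 * ((m : ℂ) + n) ^ 2 * (k1 : ℂ) * (k2 : ℂ))) * hz
      + (4 * ((m : ℂ) - n) ^ 2 * (a : ℂ) ^ 2 * (z ^ (a - 1)) ^ 2) * hsq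
      - ((m : ℂ) - n) ^ 2 * (z ^ (a - 1)) ^ 2 * keyC
      - (4 * ((m : ℂ) - n) ^ 2 * (a : ℂ) ^ 2 * (z ^ (a - 1)) ^ 2 * sq ^ 2) * hI
end
end
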